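/- Meyers' Theorem 4': Let a < b and let f : ℝ → ℝ be differentiable at every point of the closed interval [a, b] with derivative f' continuous on [a, b]. If f'(b) * (f(b) - f(a) - (b - a) * f'(a)) > 0, then there exists ξ ∈ (a, b) such that f'(ξ) = (f(b) - f(ξ)) / (b - a). -/
import Mathlib

/-- Meyers' Theorem 4'. -/
theorem meyers_theorem_4' (f f' : ℝ → ℝ) (a b : ℝ) (hab : a < b)
    (hf : ∀ x ∈ Set.Icc a b, HasDerivWithinAt f (f' x) (Set.Icc a b) x)
    (hf' : ContinuousOn f' (Set.Icc a b))
    (hcond : f' b * (f b - f a - (b - a) * f' a) > 0) :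
    ∃ ξ ∈ Set.Ioo a b, f' ξ = (f b - f ξ) / (b - a) := by
  set φ : ℝ → ℝ := fun x => (b - a) * f' x - (f b - f x) with hφ
  have hfc : ContinuousOn f (Set.Icc a b) := fun x hx => (hf x hx).continuousWithinAt
  have hφc : ContinuousOn φ (Set.Icc a b) :=
    (continuousOn_const.mul hf').sub (continuousOn_const.sub hfc)
  have hprod : φ a * φ b < 0 := by
    show ((b - a) * f' a - (f b - f a)) * ((b - a) * f' b - (f b - f b)) < 0
    nlinarith [hcond, sub_pos.mpr hab]
  have key : ∀ ξ ∈ Set.Ioo a b, φ ξ = 0 → f' ξ = (f b - f ξ) / (b - a) := by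
    intro ξ _ h0
    have h0' : (b - a) * f' ξ - (f b - f ξ) = 0 := h0
    rw [eq_div_iff (sub_ne_zero.mpr hab.ne')]
    linarith
  rcases lt_or_ge (φ a) (φ b) with hlt | hle
  · have h0 : (0:ℝ) ∈ Set.Ioo (φ a) (φ b) := by
      constructor <;> nlinarith
    obtain ⟨ξ, hξ, hφξ⟩ := intermediate_value_Ioo hab.le hφc h0
    exact ⟨ξ, hξ, key ξ hξ hφξ⟩
  · have h0 : (0:ℝ) ∈ Set.Ioo (φ b) (φ a) := by
      constructor <;> nlinarith
    obtain ⟨ξ, hξ, hφξ⟩ := intermediate_value_Ioo' hab.le hφc h0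
    exact ⟨ξ, hξ, key ξ hξ hφξ⟩
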